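/- Let h > 1. No randomized pricing mechanism (a probability distribution Q over prices) satisfies E_{p∼Q}[p·1[p ≤ v]] ≥ v/β for all v ∈ [1,h] with β < 1 + ln h. That is, the minimum β for which a random-price mechanism guarantees a 1/β fraction of v for every v ∈ [1,h] is 1 + ln h. -/

import Mathlib

open MeasureTheory

/-- Lower bound for monopoly-pricing platforms: no randomized price
distribution `Q` guarantees expected revenue `E_{p∼Q}[p·1[p ≤ v]] ≥ v/β` for
every value `v ∈ [1,h]` with `β < 1 + log h`. -/
theorem monopoly_platform_lower_bound (h : ℝ) (hh : 1 < h)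
    (Q : Measure ℝ) [IsProbabilityMeasure Q] (β : ℝ) (hβ : 0 < β)
    (hguar : ∀ v ∈ Set.Icc (1:ℝ) h,
      v / β ≤ ∫ p, (Set.Iic v).indicator (fun p => p) p ∂Q) :
    1 + Real.log h ≤ β := by
  classical
  have h0 : (0:ℝ) < h := lt_trans one_pos hh
  set L := Real.log h with hLdef
  have hL0 : 0 < L := Real.log_pos hh
  -- integrability of the revenue integrand at the top value
  have hInth : Integrable ((Set.Iic h).indicator (fun p : ℝ => p)) Q := by
    by_contra hni
    have hg := hguar h ⟨le_of_lt hh, le_refl h⟩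
    rw [integral_undef hni] at hg
    have : (0:ℝ) < h / β := div_pos h0 hβ
    linarith
  have hInt : ∀ v : ℝ, v ≤ h → Integrable ((Set.Iic v).indicator (fun p : ℝ => p)) Q := by
    intro v hv
    refine hInth.mono ?_ ?_
    · exact (measurable_id.indicator measurableSet_Iic).aestronglyMeasurable
    · filter_upwards with p
      by_cases hp : p ∈ Set.Iic v
      · rw [Set.indicator_of_mem hp,
          Set.indicator_of_mem (show p ∈ Set.Iic h from le_trans hp hv)]
      · rw [Set.indicator_of_notMem hp]
        simp
  -- key finite bound
  have key : ∀ n : ℕ, 1 ≤ n →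
      1 + ((n:ℝ) - 1) * (1 - (h ^ ((n:ℝ))⁻¹)⁻¹) ≤ β := by
    intro n hn
    obtain ⟨m, rfl⟩ : ∃ m, n = m + 1 := ⟨n - 1, by omega⟩
    set n := m + 1 with hndef
    set r : ℝ := h ^ ((n:ℝ))⁻¹ with hrdef
    have hnpos : (0:ℝ) < (n:ℝ) := by positivity
    have hr1 : 1 < r := by
      rw [hrdef]
      exact Real.one_lt_rpow_iff_of_pos h0 |>.mpr (Or.inl ⟨hh, by positivity⟩)
    have hr0 : 0 < r := lt_trans one_pos hr1
    set v : ℕ → ℝ := fun i => r ^ i with hvdef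
    have hv0 : ∀ i, 0 < v i := fun i => pow_pos hr0 i
    have hv1 : ∀ i, 1 ≤ i → 1 ≤ v i := by
      intro i _
      calc (1:ℝ) = r ^ 0 := (pow_zero r).symm
        _ ≤ r ^ i := pow_le_pow_right₀ hr1.le (Nat.zero_le i)
    have hvn : v n = h := by
      rw [hvdef]
      simp only
      rw [← Real.rpow_natCast r n, hrdef, ← Real.rpow_mul h0.le,
        inv_mul_cancel₀ hnpos.ne', Real.rpow_one]
    have hvmono : ∀ i j : ℕ, i ≤ j → v i ≤ v j := by
      intro i j hij
      exact pow_le_pow_right₀ hr1.le hij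
    have hvh : ∀ i, i ≤ n → v i ≤ h := fun i hi => hvn ▸ hvmono i n hi
    set u : ℕ → ℝ := fun i => if i ≤ n then (v i)⁻¹ else 0 with hudef
    have hu_nonneg : ∀ i, 0 ≤ u i := by
      intro i; rw [hudef]; dsimp only
      split
      · exact inv_nonneg.mpr (hv0 i).le
      · exact le_refl 0
    have hu_mono : ∀ i, u (i+1) ≤ u i := by
      intro i; rw [hudef]; dsimp only
      by_cases hi : i + 1 ≤ n
      · rw [if_pos hi, if_pos (by omega)]
        exact inv_anti₀ (hv0 i) (hvmono i (i+1) (by omega))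
      · rw [if_neg hi]
        split
        · exact inv_nonneg.mpr (hv0 _).le
        · exact le_refl 0
    have huv : ∀ i, u i * v i ≤ 1 := by
      intro i; rw [hudef]; dsimp only
      split
      · rw [inv_mul_cancel₀ (hv0 i).ne']
      · rw [zero_mul]; exact zero_le_one
    have huv_eq : ∀ i, i ≤ n → u i * v i = 1 := by
      intro i hi; rw [hudef]; dsimp only
      rw [if_pos hi, inv_mul_cancel₀ (hv0 i).ne']
    -- pointwise bound by downward induction
    have main : ∀ k m' : ℕ, m' + k = n + 1 → ∀ p : ℝ,
        (∑ i ∈ Finset.Icc m' n,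
          (u i - u (i+1)) * (Set.Iic (v i)).indicator (fun p => p) p)
          ≤ min (max p 0 * u m') 1 := by
      intro k
      induction k with
      | zero =>
        intro m' hm' p
        rw [Finset.Icc_eq_empty (by omega), Finset.sum_empty]
        exact le_min (mul_nonneg (le_max_right p 0) (hu_nonneg m')) zero_le_one
      | succ k ih =>
        intro m' hm' p
        have hmn : m' ≤ n := by omega
        have hins : Finset.Icc m' n = insert m' (Finset.Icc (m'+1) n) := by
          ext j; simp only [Finset.mem_Icc, Finset.mem_insert]; omega
        rw [hins, Finset.sum_insert (by simp only [Finset.mem_Icc]; omega)]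
        have ihS := ih (m'+1) (by omega) p
        have humm := hu_mono m'
        have hum1 := hu_nonneg (m'+1)
        by_cases hp : p ≤ v m'
        · rw [Set.indicator_of_mem (Set.mem_Iic.mpr hp)]
          rcases le_or_gt p 0 with hp0 | hp0
          · have hmax : max p 0 = 0 := max_eq_right hp0
            rw [hmax] at ihS ⊢
            rw [zero_mul] at ihS ⊢
            have hS0 : (∑ i ∈ Finset.Icc (m'+1) n,
                (u i - u (i+1)) * (Set.Iic (v i)).indicator (fun p => p) p) ≤ 0 :=
              ihS.trans (min_le_left 0 1)
            have hterm : (u m' - u (m'+1)) * p ≤ 0 :=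
              mul_nonpos_of_nonneg_of_nonpos (by linarith) hp0
            exact le_min (by linarith) (by linarith)
          · have hmax : max p 0 = p := max_eq_left hp0.le
            rw [hmax] at ihS ⊢
            have hS1 : (∑ i ∈ Finset.Icc (m'+1) n,
                (u i - u (i+1)) * (Set.Iic (v i)).indicator (fun p => p) p)
                ≤ p * u (m'+1) := ihS.trans (min_le_left _ _)
            have huvm := huv_eq m' hmn
            have hum := hu_nonneg m'
            refine le_min (by nlinarith) ?_
            nlinarith
        · rw [Set.indicator_of_notMem (by simpa using hp), mul_zero, zero_add]
          refine ihS.trans (min_le_min ?_ (le_refl 1))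
          exact mul_le_mul_of_nonneg_left humm (le_max_right p 0)
    have hpt : ∀ p : ℝ, (∑ i ∈ Finset.Icc 1 n,
        (u i - u (i+1)) * (Set.Iic (v i)).indicator (fun p => p) p) ≤ 1 :=
      fun p => (main n 1 (by omega) p).trans (min_le_right _ _)
    -- integrate the pointwise bound
    have hIntEach : ∀ i ∈ Finset.Icc 1 n, Integrable
        (fun p => (u i - u (i+1)) * (Set.Iic (v i)).indicator (fun p => p) p) Q := by
      intro i hi
      rw [Finset.mem_Icc] at hi
      exact (hInt (v i) (hvh i hi.2)).const_mul _
    have hFInt : Integrable (fun p => ∑ i ∈ Finset.Icc 1 n,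
        (u i - u (i+1)) * (Set.Iic (v i)).indicator (fun p => p) p) Q :=
      integrable_finset_sum _ hIntEach
    have hswap : (∫ p, (∑ i ∈ Finset.Icc 1 n,
          (u i - u (i+1)) * (Set.Iic (v i)).indicator (fun p => p) p) ∂Q)
        = ∑ i ∈ Finset.Icc 1 n,
          ∫ p, (u i - u (i+1)) * (Set.Iic (v i)).indicator (fun p => p) p ∂Q :=
      integral_finset_sum _ hIntEach
    have hle1 : (∫ p, (∑ i ∈ Finset.Icc 1 n,
          (u i - u (i+1)) * (Set.Iic (v i)).indicator (fun p => p) p) ∂Q) ≤ 1 := by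
      have := integral_mono hFInt (integrable_const (1:ℝ)) hpt
      simpa using this
    have hterm_le : ∀ i ∈ Finset.Icc 1 n,
        (u i - u (i+1)) * (v i / β)
          ≤ ∫ p, (u i - u (i+1)) * (Set.Iic (v i)).indicator (fun p => p) p ∂Q := by
      intro i hi
      rw [Finset.mem_Icc] at hi
      rw [integral_const_mul]
      exact mul_le_mul_of_nonneg_left
        (hguar (v i) ⟨hv1 i hi.1, hvh i hi.2⟩) (by linarith [hu_mono i, hu_nonneg (i+1)])
    have hsum_le : (∑ i ∈ Finset.Icc 1 n, (u i - u (i+1)) * (v i / β)) ≤ 1 := by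
      calc (∑ i ∈ Finset.Icc 1 n, (u i - u (i+1)) * (v i / β))
          ≤ ∑ i ∈ Finset.Icc 1 n,
            ∫ p, (u i - u (i+1)) * (Set.Iic (v i)).indicator (fun p => p) p ∂Q :=
            Finset.sum_le_sum hterm_le
        _ = _ := hswap.symm
        _ ≤ 1 := hle1
    -- compute the weighted sum of values
    have hbody : ∀ i ∈ Finset.Icc 1 m, (u i - u (i+1)) * v i = 1 - r⁻¹ := by
      intro i hi
      rw [Finset.mem_Icc] at hi
      have h1 : u i * v i = 1 := huv_eq i (by omega)
      have h2 : u (i+1) * v i = r⁻¹ := by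
        rw [hudef]; dsimp only
        rw [if_pos (by omega), hvdef]; dsimp only
        rw [pow_succ, mul_inv, mul_comm ((r:ℝ)^i)⁻¹ r⁻¹, mul_assoc,
          inv_mul_cancel₀ (pow_pos hr0 i).ne', mul_one]
      rw [sub_mul, h1, h2]
    have htop : (u n - u (n+1)) * v n = 1 := by
      have h1 : u n * v n = 1 := huv_eq n (le_refl n)
      have h2 : u (n+1) = 0 := by rw [hudef]; dsimp only; rw [if_neg (by omega)]
      rw [sub_mul, h1, h2, zero_mul, sub_zero]
    have hsumval : (∑ i ∈ Finset.Icc 1 n, (u i - u (i+1)) * v i)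
        = (m:ℝ) * (1 - r⁻¹) + 1 := by
      rw [hndef, Finset.sum_Icc_succ_top (by omega)]
      rw [Finset.sum_congr rfl hbody, Finset.sum_const, Nat.card_Icc]
      simp only [Nat.add_sub_cancel, nsmul_eq_mul]
      rw [← hndef, htop]
    have hdiv : (∑ i ∈ Finset.Icc 1 n, (u i - u (i+1)) * (v i / β))
        = ((m:ℝ) * (1 - r⁻¹) + 1) / β := by
      rw [← hsumval, Finset.sum_div]
      exact Finset.sum_congr rfl (fun i _ => by ring)
    rw [hdiv] at hsum_le
    have hfin : (m:ℝ) * (1 - r⁻¹) + 1 ≤ β := by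
      rwa [div_le_one hβ] at hsum_le
    have hcast : ((n:ℝ) - 1) = (m:ℝ) := by rw [hndef]; push_cast; ring
    rw [hcast]
    linarith
  -- pass to the limit
  have hbound : ∀ n : ℕ, 1 ≤ n →
      1 + (1 - 1/(n:ℝ)) * L * Real.exp (-(L / (n:ℝ))) ≤ β := by
    intro n hn
    refine le_trans ?_ (key n hn)
    have hnpos : (0:ℝ) < (n:ℝ) := by exact_mod_cast hn
    have hre : (h ^ ((n:ℝ))⁻¹)⁻¹ = Real.exp (-(L / (n:ℝ))) := by
      rw [Real.rpow_def_of_pos h0, ← Real.exp_neg, hLdef]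
      ring_nf
    rw [hre]
    set t := L / (n:ℝ) with htdef
    have ht0 : 0 < t := div_pos hL0 hnpos
    have hexp : Real.exp t * Real.exp (-t) = 1 := by
      rw [← Real.exp_add, add_neg_cancel, Real.exp_zero]
    have h1 : t * Real.exp (-t) ≤ 1 - Real.exp (-t) := by
      have := Real.add_one_le_exp t
      nlinarith [Real.exp_pos (-t)]
    have h2 : (1 - 1/(n:ℝ)) * L = ((n:ℝ) - 1) * t := by
      rw [htdef]; field_simp
    rw [h2]
    have hn1 : (0:ℝ) ≤ (n:ℝ) - 1 := by
      have : (1:ℝ) ≤ (n:ℝ) := by exact_mod_cast hn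
      linarith
    nlinarith
  have hlim : Filter.Tendsto
      (fun n : ℕ => 1 + (1 - 1/(n:ℝ)) * L * Real.exp (-(L / (n:ℝ))))
      Filter.atTop (nhds (1 + L)) := by
    have t1 : Filter.Tendsto (fun n : ℕ => 1/(n:ℝ)) Filter.atTop (nhds 0) :=
      tendsto_one_div_atTop_nhds_zero_nat
    have t2 : Filter.Tendsto (fun n : ℕ => L/(n:ℝ)) Filter.atTop (nhds 0) :=
      tendsto_const_div_atTop_nhds_zero_nat L
    have t3 : Filter.Tendsto (fun n : ℕ => Real.exp (-(L/(n:ℝ)))) Filter.atTop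
        (nhds 1) := by
      have t2' : Filter.Tendsto (fun n : ℕ => -(L/(n:ℝ))) Filter.atTop (nhds 0) := by
        simpa using t2.neg
      have := (Real.continuous_exp.tendsto 0).comp t2'
      simpa [Function.comp_def] using this
    have t4 : Filter.Tendsto (fun n : ℕ => (1 - 1/(n:ℝ)) * L * Real.exp (-(L/(n:ℝ))))
        Filter.atTop (nhds ((1 - 0) * L * 1)) :=
      ((tendsto_const_nhds.sub t1).mul_const L).mul t3
    have t5 : Filter.Tendsto
        (fun n : ℕ => 1 + (1 - 1/(n:ℝ)) * L * Real.exp (-(L/(n:ℝ))))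
        Filter.atTop (nhds (1 + (1 - 0) * L * 1)) := tendsto_const_nhds.add t4
    simpa using t5
  exact le_of_tendsto hlim (Filter.eventually_atTop.mpr ⟨1, fun n hn => hbound n hn⟩)
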